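/- Let (X_i)_{1≤i≤n} be a finite sequence of martingale differences adapted to a filtration (F_i) with F_0 trivial, such that for some K > 0 and all i, E[e^{|X_i|} | F_{i−1}] ≤ K almost surely. Set M_n = X_1 + ... + X_n. Then for all t ∈ [0,1], E[e^{t M_n}] ≤ exp(n K t²) and E[e^{−t M_n}] ≤ exp(n K t²). -/

import Mathlib

open MeasureTheory Real

lemma aux_g {c : ℝ} (hc : 0 ≤ c) (hc1 : c ≤ 1) {a : ℝ} (ha : 0 ≤ a) :
    Real.exp (c * a) - 1 ≤ c * (Real.exp a - 1) := by
  set g : ℝ → ℝ := fun x => c * (Real.exp x - 1) - (Real.exp (c * x) - 1) with hgdef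
  have hderiv : ∀ x, HasDerivAt g (c * Real.exp x - Real.exp (c * x) * c) x := by
    intro x
    have h2 : HasDerivAt (fun x : ℝ => c * x) c x := by
      simpa using (hasDerivAt_id x).const_mul c
    have h3 : HasDerivAt (fun x => Real.exp (c * x)) (Real.exp (c * x) * c) x :=
      (Real.hasDerivAt_exp (c * x)).comp x h2
    exact (((Real.hasDerivAt_exp x).sub_const 1).const_mul c).sub (h3.sub_const 1)
  have hmono : MonotoneOn g (Set.Ici 0) := by
    apply monotoneOn_of_deriv_nonneg (convex_Ici 0)
    · exact (Continuous.continuousOn (by fun_prop))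
    · intro x _; exact (hderiv x).differentiableAt.differentiableWithinAt
    · intro x hx
      rw [interior_Ici] at hx
      rw [(hderiv x).deriv]
      have hle : Real.exp (c * x) ≤ Real.exp x := Real.exp_le_exp.2 (by nlinarith [(Set.mem_Ioi.mp hx).le])
      nlinarith
  have h0 : g 0 ≤ g a := hmono (by simp) (by simpa using ha) ha
  simp [hgdef] at h0
  linarith

lemma aux_h {c : ℝ} (hc : 0 ≤ c) (hc1 : c ≤ 1) {a : ℝ} (ha : 0 ≤ a) :
    Real.exp (c * a) - 1 - c * a ≤ c ^ 2 * (Real.exp a - 1 - a) := by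
  set h : ℝ → ℝ := fun x => c ^ 2 * (Real.exp x - 1 - x) - (Real.exp (c * x) - 1 - c * x)
    with hhdef
  have hderiv : ∀ x, HasDerivAt h (c ^ 2 * (Real.exp x - 1) - (Real.exp (c * x) * c - c)) x := by
    intro x
    have h2 : HasDerivAt (fun x : ℝ => c * x) c x := by
      simpa using (hasDerivAt_id x).const_mul c
    have h3 : HasDerivAt (fun x => Real.exp (c * x)) (Real.exp (c * x) * c) x :=
      (Real.hasDerivAt_exp (c * x)).comp x h2
    have h4 : HasDerivAt (fun x => Real.exp x - 1 - x) (Real.exp x - 1) x := by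
      exact (((Real.hasDerivAt_exp x).sub_const 1).sub (hasDerivAt_id' x))
    have h5 : HasDerivAt (fun x => Real.exp (c * x) - 1 - c * x)
        (Real.exp (c * x) * c - c) x := (h3.sub_const 1).sub h2
    exact (h4.const_mul (c ^ 2)).sub h5
  have hmono : MonotoneOn h (Set.Ici 0) := by
    apply monotoneOn_of_deriv_nonneg (convex_Ici 0)
    · exact (Continuous.continuousOn (by fun_prop))
    · intro x _; exact (hderiv x).differentiableAt.differentiableWithinAt
    · intro x hx
      rw [interior_Ici] at hx
      rw [(hderiv x).deriv]
      have := aux_g hc hc1 (Set.mem_Ioi.mp hx).le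
      nlinarith
  have h0 : h 0 ≤ h a := hmono (by simp) (by simpa using ha) ha
  simp [hhdef] at h0
  linarith

lemma aux1 (u : ℝ) : Real.exp u - 1 - u ≤ Real.exp |u| - 1 - |u| := by
  rcases le_or_gt 0 u with h | h
  · rw [abs_of_nonneg h]
  · rw [abs_of_neg h]
    have hs : Real.sinh u < u := by
      have := (Real.self_lt_sinh_iff (x := -u)).2 (by linarith)
      have hn : Real.sinh u = -Real.sinh (-u) := by rw [Real.sinh_neg]; ring
      linarith
    rw [Real.sinh_eq] at hs
    linarith

lemma key_ineq {s : ℝ} (hs : |s| ≤ 1) (x : ℝ) :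
    Real.exp (s * x) ≤ 1 + s * x + s ^ 2 * Real.exp |x| := by
  have h1 := aux1 (s * x)
  have h2 : Real.exp |s * x| - 1 - |s * x| ≤ s ^ 2 * (Real.exp |x| - 1 - |x|) := by
    rw [abs_mul]
    have := aux_h (abs_nonneg s) hs (abs_nonneg x)
    simpa [sq_abs] using this
  nlinarith [sq_nonneg s, abs_nonneg x, Real.exp_pos |x|]

lemma main_bound {Ω : Type*} {m0 : MeasurableSpace Ω} (μ : Measure Ω) [IsProbabilityMeasure μ]
    (n : ℕ) (ℱ : MeasureTheory.Filtration ℕ m0)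
    (X : ℕ → Ω → ℝ) (K : ℝ) (hK : 0 < K)
    (hadapted : ∀ i ∈ Finset.Icc 1 n, StronglyMeasurable[ℱ i] (X i))
    (hint : ∀ i ∈ Finset.Icc 1 n, Integrable (X i) μ)
    (hmd : ∀ i ∈ Finset.Icc 1 n, μ[X i | ℱ (i - 1)] =ᵐ[μ] 0)
    (hexpint : ∀ i ∈ Finset.Icc 1 n, Integrable (fun ω => Real.exp |X i ω|) μ)
    (hcond : ∀ i ∈ Finset.Icc 1 n,
      ∀ᵐ ω ∂μ, (μ[fun ω' => Real.exp |X i ω'| | ℱ (i - 1)]) ω ≤ K)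
    (s : ℝ) (hs : |s| ≤ 1) :
    ∀ k, k ≤ n → Integrable (fun ω => Real.exp (s * ∑ i ∈ Finset.Icc 1 k, X i ω)) μ ∧
      ∫ ω, Real.exp (s * ∑ i ∈ Finset.Icc 1 k, X i ω) ∂μ ≤ Real.exp (k * K * s ^ 2) := by
  intro k
  induction k with
  | zero =>
    intro _
    constructor
    · simpa using (integrable_const (1 : ℝ))
    · simp
  | succ k ih =>
    intro hkn
    obtain ⟨hGint, hGbound⟩ := ih (by omega)
    have hk1n : k + 1 ∈ Finset.Icc 1 n := by simp [Finset.mem_Icc]; omega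
    set G : Ω → ℝ := fun ω => Real.exp (s * ∑ i ∈ Finset.Icc 1 k, X i ω) with hGdef
    set Y : Ω → ℝ := fun ω => Real.exp (s * X (k + 1) ω) with hYdef
    -- split
    have hsplit : ∀ ω, Real.exp (s * ∑ i ∈ Finset.Icc 1 (k + 1), X i ω) = G ω * Y ω := by
      intro ω
      rw [Finset.sum_Icc_succ_top (by omega : 1 ≤ k + 1), mul_add, Real.exp_add]
    -- measurability
    have hSmeas : StronglyMeasurable[ℱ k] (fun ω => ∑ i ∈ Finset.Icc 1 k, X i ω) := by
      apply Finset.stronglyMeasurable_fun_sum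
      intro i hi
      rw [Finset.mem_Icc] at hi
      exact (hadapted i (by simp [Finset.mem_Icc]; omega)).mono (ℱ.mono hi.2)
    have hGmeas : StronglyMeasurable[ℱ k] G :=
      Real.continuous_exp.comp_stronglyMeasurable (hSmeas.const_mul s)
    have hGmeas0 : StronglyMeasurable G := hGmeas.mono (ℱ.le k)
    have hXmeas : StronglyMeasurable (X (k + 1)) := (hadapted _ hk1n).mono (ℱ.le _)
    have hYmeas : StronglyMeasurable Y :=
      Real.continuous_exp.comp_stronglyMeasurable (hXmeas.const_mul s)
    have hGpos : ∀ ω, 0 < G ω := fun ω => Real.exp_pos _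
    have hYpos : ∀ ω, 0 < Y ω := fun ω => Real.exp_pos _
    -- integrability of Y
    have hYle : ∀ ω, Y ω ≤ Real.exp |X (k + 1) ω| := by
      intro ω
      apply Real.exp_le_exp.2
      calc s * X (k + 1) ω ≤ |s * X (k + 1) ω| := le_abs_self _
        _ = |s| * |X (k + 1) ω| := abs_mul _ _
        _ ≤ 1 * |X (k + 1) ω| := by
            exact mul_le_mul_of_nonneg_right hs (abs_nonneg _)
        _ = |X (k + 1) ω| := one_mul _
    have hYint : Integrable Y μ := by
      apply Integrable.mono' (hexpint _ hk1n) hYmeas.aestronglyMeasurable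
      exact Filter.Eventually.of_forall fun ω => by
        rw [Real.norm_eq_abs, abs_of_pos (hYpos ω)]; exact hYle ω
    -- conditional bound on Y
    have hcondY : μ[Y | ℱ k] ≤ᵐ[μ] fun _ => 1 + s ^ 2 * K := by
      set Z : Ω → ℝ := fun ω => 1 + s * X (k + 1) ω + s ^ 2 * Real.exp |X (k + 1) ω| with hZdef
      have hZint : Integrable Z μ :=
        ((integrable_const (1 : ℝ)).add ((hint _ hk1n).const_mul s)).add
          ((hexpint _ hk1n).const_mul (s ^ 2))
      have h1 : μ[Y | ℱ k] ≤ᵐ[μ] μ[Z | ℱ k] :=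
        condExp_mono hYint hZint (Filter.Eventually.of_forall fun ω => key_ineq hs _)
      have h2 : μ[Z | ℱ k] =ᵐ[μ]
          (fun _ => (1 : ℝ)) + (μ[fun ω => s * X (k + 1) ω | ℱ k]) +
            (μ[fun ω => s ^ 2 * Real.exp |X (k + 1) ω| | ℱ k]) := by
        refine (condExp_add (m := ℱ k) ((integrable_const (1 : ℝ)).add ((hint _ hk1n).const_mul s))
          ((hexpint _ hk1n).const_mul (s ^ 2))).trans ?_
        have h3 := condExp_add (μ := μ) (m := ℱ k) (integrable_const (1 : ℝ))
          ((hint _ hk1n).const_mul s)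
        filter_upwards [h3] with ω hω
        simp only [Pi.add_apply] at hω ⊢
        rw [hω, condExp_const (ℱ.le k)]
      have h4 : μ[fun ω => s * X (k + 1) ω | ℱ k] =ᵐ[μ] 0 := by
        have := condExp_smul (μ := μ) (m := ℱ k) s (X (k + 1))
        have hmd' := hmd _ hk1n
        simp only [Nat.add_sub_cancel] at hmd'
        refine (this.trans ?_)
        filter_upwards [hmd'] with ω hω
        simp only [Pi.smul_apply, smul_eq_mul, hω, Pi.zero_apply, mul_zero]
      have h5 : μ[fun ω => s ^ 2 * Real.exp |X (k + 1) ω| | ℱ k] ≤ᵐ[μ]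
          fun _ => s ^ 2 * K := by
        have hsm := condExp_smul (μ := μ) (m := ℱ k) (s ^ 2)
          (fun ω => Real.exp |X (k + 1) ω|)
        have hc' := hcond _ hk1n
        simp only [Nat.add_sub_cancel] at hc'
        filter_upwards [hsm, hc'] with ω h₁ h₂
        have heq : (fun ω => s ^ 2 * Real.exp |X (k + 1) ω|)
            = s ^ 2 • (fun ω => Real.exp |X (k + 1) ω|) := by
          ext ω'; simp [smul_eq_mul]
        rw [heq, h₁]
        simp only [Pi.smul_apply, smul_eq_mul]
        exact mul_le_mul_of_nonneg_left h₂ (sq_nonneg s)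
      filter_upwards [h1, h2, h4, h5] with ω h1 h2 h4 h5
      rw [h2] at h1
      simp only [Pi.add_apply, h4, Pi.zero_apply] at h1
      calc (μ[Y|ℱ k]) ω ≤ 1 + 0 + (μ[fun ω => s ^ 2 * Real.exp |X (k + 1) ω| | ℱ k]) ω := h1
        _ ≤ 1 + s ^ 2 * K := by linarith
    -- truncation
    set B : ℕ → Ω → ℝ := fun m ω => min (G ω) (m : ℝ) with hBdef
    have hBmeas : ∀ m : ℕ, StronglyMeasurable[ℱ k] (B m) := fun m =>
      (continuous_id.min continuous_const).comp_stronglyMeasurable hGmeas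
    have hBnonneg : ∀ (m : ℕ) ω, 0 ≤ B m ω := fun m ω =>
      le_min (hGpos ω).le (Nat.cast_nonneg m)
    have hBleG : ∀ (m : ℕ) ω, B m ω ≤ G ω := fun m ω => min_le_left _ _
    have hBbdd : ∀ (m : ℕ) ω, ‖B m ω‖ ≤ (m : ℝ) := fun m ω => by
      rw [Real.norm_eq_abs, abs_of_nonneg (hBnonneg m ω)]; exact min_le_right _ _
    have hBint : ∀ m : ℕ, Integrable (B m) μ := fun m =>
      (integrable_const ((m : ℝ))).mono' ((hBmeas m).mono (ℱ.le k)).aestronglyMeasurable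
        (Filter.Eventually.of_forall fun ω => by simpa using hBbdd m ω)
    have hBYint : ∀ m : ℕ, Integrable (fun ω => B m ω * Y ω) μ := fun m =>
      hYint.bdd_mul ((hBmeas m).mono (ℱ.le k)).aestronglyMeasurable (Filter.Eventually.of_forall fun ω => hBbdd m ω)
    have hGintnn : 0 ≤ ∫ ω, G ω ∂μ := integral_nonneg fun ω => (hGpos ω).le
    have hIconst : (0 : ℝ) ≤ 1 + s ^ 2 * K := by positivity
    have hBYbound : ∀ m : ℕ, ∫ ω, B m ω * Y ω ∂μ ≤ (1 + s ^ 2 * K) * ∫ ω, G ω ∂μ := by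
      intro m
      have hpull := condExp_stronglyMeasurable_mul_of_bound (ℱ.le k) (hBmeas m) hYint m
        (Filter.Eventually.of_forall (hBbdd m))
      calc ∫ ω, B m ω * Y ω ∂μ = ∫ ω, (μ[fun ω => B m ω * Y ω | ℱ k]) ω ∂μ :=
            (integral_condExp (ℱ.le k)).symm
        _ = ∫ ω, B m ω * (μ[Y | ℱ k]) ω ∂μ := by
            apply integral_congr_ae
            filter_upwards [hpull] with ω h
            exact h
        _ ≤ ∫ ω, (1 + s ^ 2 * K) * B m ω ∂μ := by
            apply integral_mono_ae
              (integrable_condExp.bdd_mul ((hBmeas m).mono (ℱ.le k)).aestronglyMeasurable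
                (Filter.Eventually.of_forall fun ω => hBbdd m ω)) ((hBint m).const_mul _)
            filter_upwards [hcondY] with ω h
            calc B m ω * (μ[Y | ℱ k]) ω ≤ B m ω * (1 + s ^ 2 * K) :=
                  mul_le_mul_of_nonneg_left h (hBnonneg m ω)
              _ = (1 + s ^ 2 * K) * B m ω := mul_comm _ _
        _ = (1 + s ^ 2 * K) * ∫ ω, B m ω ∂μ := integral_const_mul _ _
        _ ≤ (1 + s ^ 2 * K) * ∫ ω, G ω ∂μ :=
            mul_le_mul_of_nonneg_left (integral_mono (hBint m) hGint (hBleG m)) hIconst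
    -- monotone convergence
    have hGYnn : ∀ ω, 0 ≤ G ω * Y ω := fun ω => mul_nonneg (hGpos ω).le (hYpos ω).le
    have hGYmeas : AEStronglyMeasurable (fun ω => G ω * Y ω) μ :=
      (hGmeas0.mul hYmeas).aestronglyMeasurable
    have hmc : ∫⁻ ω, ENNReal.ofReal (G ω * Y ω) ∂μ
        = ⨆ m : ℕ, ∫⁻ ω, ENNReal.ofReal (B m ω * Y ω) ∂μ := by
      rw [← lintegral_iSup' (f := fun m ω => ENNReal.ofReal (B m ω * Y ω)) (fun m =>
        ((((hBmeas m).mono (ℱ.le k)).measurable.mul hYmeas.measurable).ennreal_ofReal).aemeasurable)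
        (Filter.Eventually.of_forall fun ω m₁ m₂ hm' => ENNReal.ofReal_le_ofReal
          (mul_le_mul_of_nonneg_right (min_le_min le_rfl (Nat.cast_le.2 hm')) (hYpos ω).le))]
      apply lintegral_congr fun ω => ?_
      apply le_antisymm
      · have hceil : B ⌈G ω⌉₊ ω = G ω := min_eq_left (Nat.le_ceil _)
        exact le_iSup_of_le ⌈G ω⌉₊ (by rw [hceil])
      · exact iSup_le fun m => ENNReal.ofReal_le_ofReal
          (mul_le_mul_of_nonneg_right (hBleG m ω) (hYpos ω).le)
    have hsupb : ∀ m : ℕ, ∫⁻ ω, ENNReal.ofReal (B m ω * Y ω) ∂μ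
        ≤ ENNReal.ofReal ((1 + s ^ 2 * K) * ∫ ω, G ω ∂μ) := fun m => by
      rw [← ofReal_integral_eq_lintegral_ofReal (hBYint m)
        (Filter.Eventually.of_forall fun ω => mul_nonneg (hBnonneg m ω) (hYpos ω).le)]
      exact ENNReal.ofReal_le_ofReal (hBYbound m)
    have hfin : ∫⁻ ω, ENNReal.ofReal (G ω * Y ω) ∂μ
        ≤ ENNReal.ofReal ((1 + s ^ 2 * K) * ∫ ω, G ω ∂μ) := by
      rw [hmc]; exact iSup_le hsupb
    have hGYint : Integrable (fun ω => G ω * Y ω) μ := by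
      refine ⟨hGYmeas, ?_⟩
      rw [hasFiniteIntegral_iff_ofReal (Filter.Eventually.of_forall hGYnn)]
      exact lt_of_le_of_lt hfin ENNReal.ofReal_lt_top
    have hGYle : ∫ ω, G ω * Y ω ∂μ ≤ (1 + s ^ 2 * K) * ∫ ω, G ω ∂μ := by
      rw [integral_eq_lintegral_of_nonneg_ae (Filter.Eventually.of_forall hGYnn) hGYmeas]
      exact ENNReal.toReal_le_of_le_ofReal (mul_nonneg hIconst hGintnn) hfin
    have hfeq : (fun ω => Real.exp (s * ∑ i ∈ Finset.Icc 1 (k + 1), X i ω))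
        = fun ω => G ω * Y ω := funext hsplit
    constructor
    · rw [hfeq]; exact hGYint
    · rw [hfeq]
      calc ∫ ω, G ω * Y ω ∂μ ≤ (1 + s ^ 2 * K) * ∫ ω, G ω ∂μ := hGYle
        _ ≤ Real.exp (K * s ^ 2) * Real.exp (k * K * s ^ 2) := by
            apply mul_le_mul ?_ hGbound hGintnn (Real.exp_pos _).le
            have := Real.add_one_le_exp (K * s ^ 2)
            nlinarith
        _ = Real.exp ((k + 1 : ℕ) * K * s ^ 2) := by
            rw [← Real.exp_add]; congr 1; push_cast; ring


theorem stmt_3 {Ω : Type*} {m0 : MeasurableSpace Ω} (μ : Measure Ω) [IsProbabilityMeasure μ]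
    (n : ℕ) (ℱ : MeasureTheory.Filtration ℕ m0) (hF0 : ℱ 0 = ⊥)
    (X : ℕ → Ω → ℝ) (K : ℝ) (hK : 0 < K)
    (hadapted : ∀ i ∈ Finset.Icc 1 n, StronglyMeasurable[ℱ i] (X i))
    (hint : ∀ i ∈ Finset.Icc 1 n, Integrable (X i) μ)
    (hmd : ∀ i ∈ Finset.Icc 1 n, μ[X i | ℱ (i - 1)] =ᵐ[μ] 0)
    (hexpint : ∀ i ∈ Finset.Icc 1 n, Integrable (fun ω => Real.exp |X i ω|) μ)
    (hcond : ∀ i ∈ Finset.Icc 1 n,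
      ∀ᵐ ω ∂μ, (μ[fun ω' => Real.exp |X i ω'| | ℱ (i - 1)]) ω ≤ K) :
    ∀ t ∈ Set.Icc (0 : ℝ) 1,
      (∫ ω, Real.exp (t * ∑ i ∈ Finset.Icc 1 n, X i ω) ∂μ ≤ Real.exp (n * K * t ^ 2)) ∧
      (∫ ω, Real.exp (-t * ∑ i ∈ Finset.Icc 1 n, X i ω) ∂μ ≤ Real.exp (n * K * t ^ 2)) := by
  intro t ht
  obtain ⟨ht0, ht1⟩ := ht
  have h1 := (main_bound μ n ℱ X K hK hadapted hint hmd hexpint hcond t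
    (by rw [abs_of_nonneg ht0]; exact ht1) n le_rfl).2
  have h2 := (main_bound μ n ℱ X K hK hadapted hint hmd hexpint hcond (-t)
    (by rw [abs_neg, abs_of_nonneg ht0]; exact ht1) n le_rfl).2
  rw [neg_sq] at h2
  exact ⟨h1, h2⟩
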